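/- In Mem⁰, define f(m) to be the least n such that G(n_∞) = m (which exists since every m appears as a frontier value). Then f is strictly increasing: m < m' implies f(m) < f(m'). -/
import Mathlib


/-- Grundy value of Mem⁰: options of (n,k) are (n-a, a) for 1 ≤ a ≤ n, a ≠ k. -/
noncomputable def memZeroG (n k : ℕ) : ℕ :=
  sInf {v : ℕ | v ∉ (((Finset.Icc 1 n).erase k).attach.image
    (fun a => memZeroG (n - a.1) a.1))}
termination_by n
decreasing_by
  have h := Finset.mem_Icc.mp (Finset.mem_of_mem_erase a.2)
  omega

namespace MemZeroAux

/-- The options (Grundy values of moves) of position (n,k). -/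
noncomputable def opts (n k : ℕ) : Finset ℕ :=
  ((Finset.Icc 1 n).erase k).attach.image (fun a => memZeroG (n - a.1) a.1)

lemma memZeroG_eq (n k : ℕ) : memZeroG n k = sInf {v : ℕ | v ∉ opts n k} := by
  rw [memZeroG]; rfl

lemma mem_opts {n k v : ℕ} :
    v ∈ opts n k ↔ ∃ a, a ∈ (Finset.Icc 1 n).erase k ∧ memZeroG (n - a) a = v := by
  simp [opts]

/- mex basics -/
lemma mex_not_mem (s : Finset ℕ) : sInf {v : ℕ | v ∉ s} ∉ s := by
  have hne : {v : ℕ | v ∉ s}.Nonempty := by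
    obtain ⟨v, hv⟩ := Infinite.exists_notMem_finset s
    exact ⟨v, hv⟩
  exact Nat.sInf_mem hne

lemma mem_of_lt_mex {s : Finset ℕ} {v : ℕ} (h : v < sInf {v : ℕ | v ∉ s}) : v ∈ s := by
  by_contra hv
  exact absurd (Nat.sInf_le (show v ∈ {v : ℕ | v ∉ s} from hv)) (by omega)

lemma mex_eq {s : Finset ℕ} {m : ℕ} (h1 : m ∉ s) (h2 : ∀ v < m, v ∈ s) :
    sInf {v : ℕ | v ∉ s} = m := by
  refine le_antisymm (Nat.sInf_le h1) ?_
  by_contra hlt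
  push_neg at hlt
  exact (mex_not_mem s) (h2 _ hlt)

lemma memZeroG_notMem (n k : ℕ) : memZeroG n k ∉ opts n k := by
  rw [memZeroG_eq]; exact mex_not_mem _

lemma mem_opts_of_lt {n k v : ℕ} (h : v < memZeroG n k) : v ∈ opts n k := by
  rw [memZeroG_eq] at h; exact mem_of_lt_mex h

lemma opts_eq {n k k' : ℕ} (hk : k ∉ Finset.Icc 1 n) (hk' : k' ∉ Finset.Icc 1 n) :
    opts n k = opts n k' := by
  ext v
  simp only [mem_opts, Finset.mem_erase]
  constructor
  · rintro ⟨a, ⟨hne, ha⟩, hv⟩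
    refine ⟨a, ⟨fun hEq => hk' (hEq ▸ ha), ha⟩, hv⟩
  · rintro ⟨a, ⟨hne, ha⟩, hv⟩
    refine ⟨a, ⟨fun hEq => hk (hEq ▸ ha), ha⟩, hv⟩

lemma succ_not_mem (n : ℕ) : n + 1 ∉ Finset.Icc 1 n := by
  simp [Finset.mem_Icc]

/-- If k is not a legal move size, (n,k) has frontier value. -/
lemma eq_frontier {n k : ℕ} (hk : k ∉ Finset.Icc 1 n) :
    memZeroG n k = memZeroG n (n + 1) := by
  rw [memZeroG_eq, memZeroG_eq, opts_eq hk (succ_not_mem n)]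

lemma mem_opts_frontier {n v : ℕ} :
    v ∈ opts n (n + 1) ↔ ∃ a, 1 ≤ a ∧ a ≤ n ∧ memZeroG (n - a) a = v := by
  rw [mem_opts]
  constructor
  · rintro ⟨a, ha, hv⟩
    have := Finset.mem_Icc.mp (Finset.mem_of_mem_erase ha)
    exact ⟨a, this.1, this.2, hv⟩
  · rintro ⟨a, h1, h2, hv⟩
    refine ⟨a, Finset.mem_erase.mpr ⟨by omega, Finset.mem_Icc.mpr ⟨h1, h2⟩⟩, hv⟩

/-- Key fact: the least n where m appears as any Grundy value is a frontier occurrence. -/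
lemma key {m : ℕ} (hm : ∃ n k, memZeroG n k = m) :
    memZeroG (sInf {n | ∃ k, memZeroG n k = m}) (sInf {n | ∃ k, memZeroG n k = m} + 1) = m := by
  set n₀ := sInf {n | ∃ k, memZeroG n k = m} with hn₀
  have hne : {n | ∃ k, memZeroG n k = m}.Nonempty := by
    obtain ⟨n, k, hk⟩ := hm; exact ⟨n, k, hk⟩
  obtain ⟨k₀, hk₀⟩ := Nat.sInf_mem hne
  rw [memZeroG_eq]
  apply mex_eq
  · -- m is not an option of (n₀, n₀+1)
    intro hmem
    obtain ⟨a, h1, h2, hv⟩ := mem_opts_frontier.mp hmem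
    have hle : n₀ ≤ n₀ - a := Nat.sInf_le ⟨a, hv⟩
    omega
  · -- every v < m is an option
    intro v hv
    have : v ∈ opts n₀ k₀ := mem_opts_of_lt (by rw [hk₀]; exact hv)
    obtain ⟨a, ha, hva⟩ := mem_opts.mp this
    have := Finset.mem_Icc.mp (Finset.mem_of_mem_erase ha)
    exact mem_opts_frontier.mpr ⟨a, this.1, this.2, hva⟩

/-- Every m appears as a frontier value. -/
lemma exists_frontier (m : ℕ) : ∃ n, memZeroG n (n + 1) = m := by
  induction m using Nat.strong_induction_on with
  | _ m ih =>
    choose g hg using ih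
    set N := 2 * ((Finset.range m).sup fun j => if h : j < m then g j h else 0) + 1 with hN
    have hS : ∀ j < m, j ∈ opts N (N + 1) := by
      intro j hj
      have hgle : g j hj ≤ (Finset.range m).sup fun j => if h : j < m then g j h else 0 := by
        have := Finset.le_sup (f := fun j => if h : j < m then g j h else 0)
          (Finset.mem_range.mpr hj)
        simpa [hj] using this
      set b := g j hj with hb
      refine mem_opts_frontier.mpr ⟨N - b, by omega, by omega, ?_⟩
      have h1 : N - (N - b) = b := by omega
      rw [h1]
      have h2 : N - b ∉ Finset.Icc 1 b := by
        simp only [Finset.mem_Icc]; omega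
      rw [eq_frontier h2]
      exact hg j hj
    have hge : m ≤ memZeroG N (N + 1) := by
      by_contra hlt
      push_neg at hlt
      exact memZeroG_notMem N (N + 1) (hS _ hlt)
    rcases eq_or_lt_of_le hge with heq | hlt
    · exact ⟨N, heq.symm⟩
    · have hmem : m ∈ opts N (N + 1) := mem_opts_of_lt hlt
      obtain ⟨a, h1, h2, hv⟩ := mem_opts_frontier.mp hmem
      exact ⟨_, key ⟨N - a, a, hv⟩⟩

end MemZeroAux

/-- The least n with frontier value m is strictly increasing in m. -/
theorem memZero_first_frontier_strictMono (m m' : ℕ) (h : m < m') :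
    sInf {n : ℕ | memZeroG n (n + 1) = m} < sInf {n : ℕ | memZeroG n (n + 1) = m'} := by
  open MemZeroAux in
  have hne' : {n : ℕ | memZeroG n (n + 1) = m'}.Nonempty := MemZeroAux.exists_frontier m'
  set n' := sInf {n : ℕ | memZeroG n (n + 1) = m'} with hn'
  have hfn' : memZeroG n' (n' + 1) = m' := Nat.sInf_mem hne'
  have hmem : m ∈ MemZeroAux.opts n' (n' + 1) :=
    MemZeroAux.mem_opts_of_lt (by rw [hfn']; exact h)
  obtain ⟨a, h1, h2, hv⟩ := MemZeroAux.mem_opts_frontier.mp hmem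
  have hkey := MemZeroAux.key ⟨n' - a, a, hv⟩
  have hle1 : sInf {n : ℕ | memZeroG n (n + 1) = m} ≤ sInf {n | ∃ k, memZeroG n k = m} :=
    Nat.sInf_le hkey
  have hle2 : sInf {n | ∃ k, memZeroG n k = m} ≤ n' - a := Nat.sInf_le ⟨a, hv⟩
  omega
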